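/- The group with presentation ⟨x, y, z | x^2 = y^{2n}, (xy)^2 = x^2, z^{kl} = 1, xzx^{-1} = z^r, yzy^{-1} = z^{-1}⟩, where n, k, l are pairwise relatively prime odd integers with n > k > l > 1 and r ≡ -1 (mod k), r ≡ 1 (mod l), contains a normal cyclic subgroup of order kl generated by z, with quotient isomorphic to Q_{8n}. -/

import Mathlib

/-- Relators for `Q(8n, k, l) = ⟨x, y, z | x² = y^(2n), (xy)² = x², z^(kl) = 1,
xzx⁻¹ = zʳ, yzy⁻¹ = z⁻¹⟩`, with generators `0 = x`, `1 = y`, `2 = z`. -/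
def qRels (n k l : ℕ) (r : ℤ) : Set (FreeGroup (Fin 3)) :=
  {FreeGroup.of 0 ^ 2 * (FreeGroup.of 1 ^ (2 * n))⁻¹,
   (FreeGroup.of 0 * FreeGroup.of 1) ^ 2 * (FreeGroup.of 0 ^ 2)⁻¹,
   FreeGroup.of 2 ^ (k * l),
   FreeGroup.of 0 * FreeGroup.of 2 * (FreeGroup.of 0)⁻¹ * (FreeGroup.of 2 ^ r)⁻¹,
   FreeGroup.of 1 * FreeGroup.of 2 * (FreeGroup.of 1)⁻¹ * FreeGroup.of 2}

/-- The group `Q(8n, k, l)`. -/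
abbrev QGrp (n k l : ℕ) (r : ℤ) := PresentedGroup (qRels n k l r)

/-- Relators for the generalized quaternion group
`Q_{8n} = ⟨x, y | x^(2n) = y², xyx = y⟩`, with generator `0 = x`, `1 = y`. -/
def quaternionRels (m : ℕ) : Set (FreeGroup (Fin 2)) :=
  {FreeGroup.of 0 ^ m * ((FreeGroup.of 1) ^ 2)⁻¹,
   FreeGroup.of 0 * FreeGroup.of 1 * FreeGroup.of 0 * (FreeGroup.of 1)⁻¹}

/-- In a presented group, every relator maps to `1`. -/
lemma mk_rel_eq_one {α : Type*} {rels : Set (FreeGroup α)} {w : FreeGroup α}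
    (h : w ∈ rels) : PresentedGroup.mk rels w = 1 :=
  (QuotientGroup.eq_one_iff w).mpr (Subgroup.subset_normalClosure h)

lemma conj_mem_zpowers' {G : Type*} [Group G] {z g : G}
    (h : g * z * g⁻¹ ∈ Subgroup.zpowers z) (m : ℤ) :
    g * z ^ m * g⁻¹ ∈ Subgroup.zpowers z := by
  obtain ⟨j, hj⟩ := Subgroup.mem_zpowers_iff.mp h
  refine Subgroup.mem_zpowers_iff.mpr ⟨j * m, ?_⟩
  rw [zpow_mul, hj, conj_zpow]

/-- Action of the units of `ZMod m` on `Multiplicative (ZMod m)` by multiplication. -/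
def zAct (m : ℕ) : (ZMod m)ˣ →* MulAut (Multiplicative (ZMod m)) where
  toFun u := AddEquiv.toMultiplicative (DistribMulAction.toAddAut (ZMod m)ˣ (ZMod m) u)
  map_one' := by ext a; simp
  map_mul' u v := by ext a; simp [mul_smul]

lemma zAct_apply (m : ℕ) (u : (ZMod m)ˣ) (a : ZMod m) :
    zAct m u (Multiplicative.ofAdd a) = Multiplicative.ofAdd ((u : ZMod m) * a) := by
  simp [zAct, Units.smul_def]

/-- `Q(8n, k, l)` contains a normal cyclic subgroup of order `kl` generated by `z`,
with quotient isomorphic to `Q_{8n}`: there is a surjection onto `Q_{8n}` whose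
kernel is the cyclic subgroup generated by `z`, of order `kl`. -/
theorem qGrp_normal_cyclic_quotient (n k l : ℕ) (r : ℤ)
    (hodd : Odd n ∧ Odd k ∧ Odd l)
    (hcop : Nat.Coprime n k ∧ Nat.Coprime n l ∧ Nat.Coprime k l)
    (hordered : 1 < l ∧ l < k ∧ k < n)
    (hrk : (k : ℤ) ∣ r + 1) (hrl : (l : ℤ) ∣ r - 1) :
    ∃ φ : QGrp n k l r →* PresentedGroup (quaternionRels (2 * n)),
      Function.Surjective φ ∧
      φ.ker = Subgroup.zpowers (PresentedGroup.of 2) ∧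
      Nat.card φ.ker = k * l := by
  classical
  -- arithmetic on `r`
  have hmdvd : ((k * l : ℕ) : ℤ) ∣ r * r - 1 := by
    have h1 : (k : ℤ) ∣ r * r - 1 := hrk.trans ⟨r - 1, by ring⟩
    have h2 : (l : ℤ) ∣ r * r - 1 := hrl.trans ⟨r + 1, by ring⟩
    have hco : IsCoprime (k : ℤ) (l : ℤ) := Nat.isCoprime_iff_coprime.mpr hcop.2.2
    push_cast
    exact hco.mul_dvd h1 h2
  have hr2 : ((r : ZMod (k * l)) * (r : ZMod (k * l)) = 1) := by
    have h0 : ((r * r - 1 : ℤ) : ZMod (k * l)) = 0 :=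
      (ZMod.intCast_zmod_eq_zero_iff_dvd _ _).mpr hmdvd
    push_cast at h0
    linear_combination h0
  -- the concrete model `ZMod (kl) ⋊ (ZMod (kl))ˣ`
  set u : (ZMod (k * l))ˣ := ⟨(r : ZMod (k * l)), (r : ZMod (k * l)), hr2, hr2⟩ with hu
  have hu2 : u * u = 1 := Units.ext (by simpa using hr2)
  set M := Multiplicative (ZMod (k * l)) ⋊[zAct (k * l)] (ZMod (k * l))ˣ with hM
  set Xm : M := SemidirectProduct.inr u with hXm
  set Ym : M := SemidirectProduct.inr (-1 : (ZMod (k * l))ˣ) with hYm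
  set Zm : M := SemidirectProduct.inl (Multiplicative.ofAdd (1 : ZMod (k * l))) with hZm
  set fM : Fin 3 → M := ![Xm, Ym, Zm] with hfM
  have hfM0 : fM 0 = Xm := rfl
  have hfM1 : fM 1 = Ym := rfl
  have hfM2 : fM 2 = Zm := rfl
  have hXm2 : Xm ^ 2 = 1 := by
    rw [hXm, ← map_pow, sq, hu2, map_one]
  have hYm2n : Ym ^ (2 * n) = 1 := by
    rw [hYm, ← map_pow, Even.neg_one_pow ⟨n, by ring⟩, map_one]
  have hXYm : (Xm * Ym) ^ 2 = 1 := by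
    rw [hXm, hYm, ← map_mul, ← map_pow]
    have : (u * -1) ^ 2 = 1 := by
      rw [mul_pow, sq, sq, hu2, neg_mul_neg, one_mul, one_mul]
    rw [this, map_one]
  have hZmkl : Zm ^ (k * l) = 1 := by
    rw [hZm, ← map_pow, ← ofAdd_nsmul, nsmul_eq_mul, mul_one, ZMod.natCast_self,
      ofAdd_zero, map_one]
  have hZmr : Zm ^ (r : ℤ) = SemidirectProduct.inl (Multiplicative.ofAdd ((r : ZMod (k * l)))) := by
    rw [hZm, ← map_zpow, ← ofAdd_zsmul, zsmul_eq_mul, mul_one]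
  have hXZm : Xm * Zm * Xm⁻¹ = SemidirectProduct.inl (Multiplicative.ofAdd ((r : ZMod (k * l)))) := by
    rw [hXm, hZm, show (SemidirectProduct.inr u : M)⁻¹ = SemidirectProduct.inr u⁻¹ from
      (map_inv _ u).symm, ← SemidirectProduct.inl_aut, zAct_apply, mul_one]
  have hYZm : Ym * Zm * Ym⁻¹ = Zm⁻¹ := by
    rw [hYm, hZm, show (SemidirectProduct.inr (-1 : (ZMod (k * l))ˣ) : M)⁻¹ =
      SemidirectProduct.inr (-1 : (ZMod (k * l))ˣ)⁻¹ from (map_inv _ _).symm,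
      ← SemidirectProduct.inl_aut, zAct_apply, ← map_inv, ← ofAdd_neg]
    norm_num
  have hMrels : ∀ w ∈ qRels n k l r, FreeGroup.lift fM w = 1 := by
    intro w hw
    simp only [qRels, Set.mem_insert_iff, Set.mem_singleton_iff] at hw
    rcases hw with rfl | rfl | rfl | rfl | rfl
    · simp only [map_mul, map_pow, map_inv, FreeGroup.lift_apply_of, hfM0, hfM1, hXm2, hYm2n]
      simp
    · simp only [map_mul, map_pow, map_inv, FreeGroup.lift_apply_of, hfM0, hfM1, hXYm, hXm2]
      simp
    · simp only [map_pow, FreeGroup.lift_apply_of, hfM2, hZmkl]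
    · simp only [map_mul, map_inv, map_zpow, FreeGroup.lift_apply_of, hfM0, hfM2, hZmr]
      rw [hXZm]
      simp
    · simp only [map_mul, map_inv, FreeGroup.lift_apply_of, hfM1, hfM2]
      rw [hYZm]
      exact inv_mul_cancel _
  set ψ : QGrp n k l r →* M := PresentedGroup.toGroup hMrels with hψ
  -- names for the generators of `QGrp`
  set x : QGrp n k l r := PresentedGroup.of 0 with hxdef
  set y : QGrp n k l r := PresentedGroup.of 1 with hydef
  set z : QGrp n k l r := PresentedGroup.of 2 with hzdef
  have hofmk : ∀ i : Fin 3, PresentedGroup.mk (qRels n k l r) (FreeGroup.of i) =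
      PresentedGroup.of i := fun _ => rfl
  -- the defining relations of `QGrp`
  have hx2 : x ^ 2 = y ^ (2 * n) := by
    have h := mk_rel_eq_one (show FreeGroup.of 0 ^ 2 * (FreeGroup.of 1 ^ (2 * n))⁻¹ ∈
      qRels n k l r by simp [qRels])
    simpa only [map_mul, map_pow, map_inv, hofmk, mul_inv_eq_one, ← hxdef, ← hydef] using h
  have hxy : (x * y) ^ 2 = x ^ 2 := by
    have h := mk_rel_eq_one (show (FreeGroup.of 0 * FreeGroup.of 1) ^ 2 *
      (FreeGroup.of 0 ^ 2)⁻¹ ∈ qRels n k l r by simp [qRels])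
    simpa only [map_mul, map_pow, map_inv, hofmk, mul_inv_eq_one, ← hxdef, ← hydef] using h
  have hzkl : z ^ (k * l) = 1 := by
    have h := mk_rel_eq_one (show FreeGroup.of 2 ^ (k * l) ∈ qRels n k l r by simp [qRels])
    simpa only [map_pow, hofmk, ← hzdef] using h
  have hxz : x * z * x⁻¹ = z ^ (r : ℤ) := by
    have h := mk_rel_eq_one (show FreeGroup.of 0 * FreeGroup.of 2 * (FreeGroup.of 0)⁻¹ *
      (FreeGroup.of 2 ^ r)⁻¹ ∈ qRels n k l r by simp [qRels])
    simpa only [map_mul, map_inv, map_zpow, hofmk, mul_inv_eq_one, ← hxdef, ← hzdef] using h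
  have hyz : y * z * y⁻¹ = z⁻¹ := by
    have h := mk_rel_eq_one (show FreeGroup.of 1 * FreeGroup.of 2 * (FreeGroup.of 1)⁻¹ *
      FreeGroup.of 2 ∈ qRels n k l r by simp [qRels])
    have h' : y * z * y⁻¹ * z = 1 := by
      simpa only [map_mul, map_inv, hofmk, ← hydef, ← hzdef] using h
    exact eq_inv_of_mul_eq_one_left h' 
  -- the order of `z` is exactly `k * l`
  have hψz : ψ z = Zm := by
    rw [hzdef, hψ, PresentedGroup.toGroup.of, hfM2]
  have hZmorder : orderOf Zm = k * l := by
    rw [hZm, orderOf_injective SemidirectProduct.inl SemidirectProduct.inl_injective,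
      orderOf_ofAdd_eq_addOrderOf, ZMod.addOrderOf_one]
  have horder : orderOf z = k * l := by
    refine Nat.dvd_antisymm (orderOf_dvd_of_pow_eq_one hzkl) ?_
    rw [← hZmorder, ← hψz]
    exact orderOf_map_dvd ψ z
  -- the quaternion group and its relations
  set X : PresentedGroup (quaternionRels (2 * n)) := PresentedGroup.of 0 with hXdef
  set Y : PresentedGroup (quaternionRels (2 * n)) := PresentedGroup.of 1 with hYdef
  have hofmk2 : ∀ i : Fin 2, PresentedGroup.mk (quaternionRels (2 * n)) (FreeGroup.of i) =
      PresentedGroup.of i := fun _ => rfl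
  have hq1 : X ^ (2 * n) = Y ^ 2 := by
    have h := mk_rel_eq_one (show FreeGroup.of 0 ^ (2 * n) * ((FreeGroup.of 1) ^ 2)⁻¹ ∈
      quaternionRels (2 * n) by simp [quaternionRels])
    simpa only [map_mul, map_pow, map_inv, hofmk2, mul_inv_eq_one, ← hXdef, ← hYdef] using h
  have hq2 : X * Y * X = Y := by
    have h := mk_rel_eq_one (show FreeGroup.of 0 * FreeGroup.of 1 * FreeGroup.of 0 *
      (FreeGroup.of 1)⁻¹ ∈ quaternionRels (2 * n) by simp [quaternionRels])
    have h' : X * Y * X * Y⁻¹ = 1 := by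
      simpa only [map_mul, map_inv, hofmk2, ← hXdef, ← hYdef] using h
    simpa [mul_inv_eq_one] using h'
  -- the homomorphism `φ : QGrp → Q_{8n}`
  set fQ : Fin 3 → PresentedGroup (quaternionRels (2 * n)) := ![Y, X, 1] with hfQ
  have hfQ0 : fQ 0 = Y := rfl
  have hfQ1 : fQ 1 = X := rfl
  have hfQ2 : fQ 2 = 1 := rfl
  have hQrels : ∀ w ∈ qRels n k l r, FreeGroup.lift fQ w = 1 := by
    intro w hw
    simp only [qRels, Set.mem_insert_iff, Set.mem_singleton_iff] at hw
    have hYX : (Y * X) ^ 2 = Y ^ 2 := by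
      have e1 : (Y * X) ^ 2 = Y * (X * Y * X) := by
        rw [sq]
        simp [mul_assoc]
      rw [e1, hq2, sq]
    rcases hw with rfl | rfl | rfl | rfl | rfl
    · simp only [map_mul, map_pow, map_inv, FreeGroup.lift_apply_of, hfQ0, hfQ1, hq1]
      simp
    · simp only [map_mul, map_pow, map_inv, FreeGroup.lift_apply_of, hfQ0, hfQ1, hYX]
      simp
    · simp only [map_pow, FreeGroup.lift_apply_of, hfQ2, one_pow]
    · simp only [map_mul, map_inv, map_zpow, FreeGroup.lift_apply_of, hfQ0, hfQ2]
      simp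
    · simp only [map_mul, map_inv, FreeGroup.lift_apply_of, hfQ1, hfQ2]
      simp
  set φ : QGrp n k l r →* PresentedGroup (quaternionRels (2 * n)) :=
    PresentedGroup.toGroup hQrels with hφdef
  have hφ0 : φ x = Y := by rw [hxdef, hφdef, PresentedGroup.toGroup.of, hfQ0]
  have hφ1 : φ y = X := by rw [hydef, hφdef, PresentedGroup.toGroup.of, hfQ1]
  have hφ2 : φ z = 1 := by rw [hzdef, hφdef, PresentedGroup.toGroup.of, hfQ2]
  -- the homomorphism `χ : Q_{8n} → QGrp` splitting `φ`
  have hyxy : y * x * y = x := by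
    have h' : x * (y * x * y) = x * x := by
      rw [show x * (y * x * y) = (x * y) ^ 2 from by rw [sq]; simp [mul_assoc], hxy, sq]
    exact mul_left_cancel h'
  set gQ : Fin 2 → QGrp n k l r := ![y, x] with hgQ
  have hgQ0 : gQ 0 = y := rfl
  have hgQ1 : gQ 1 = x := rfl
  have hχrels : ∀ w ∈ quaternionRels (2 * n), FreeGroup.lift gQ w = 1 := by
    intro w hw
    simp only [quaternionRels, Set.mem_insert_iff, Set.mem_singleton_iff] at hw
    rcases hw with rfl | rfl
    · simp only [map_mul, map_pow, map_inv, FreeGroup.lift_apply_of, hgQ0, hgQ1, ← hx2]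
      simp
    · simp only [map_mul, map_inv, FreeGroup.lift_apply_of, hgQ0, hgQ1, hyxy]
      simp
  set χ : PresentedGroup (quaternionRels (2 * n)) →* QGrp n k l r :=
    PresentedGroup.toGroup hχrels with hχdef
  have hχ0 : χ X = y := by rw [hXdef, hχdef, PresentedGroup.toGroup.of, hgQ0]
  have hχ1 : χ Y = x := by rw [hYdef, hχdef, PresentedGroup.toGroup.of, hgQ1]
  have hcomp : φ.comp χ = MonoidHom.id _ := by
    ext i
    fin_cases i
    · show φ (χ X) = X
      rw [hχ0, hφ1]
    · show φ (χ Y) = Y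
      rw [hχ1, hφ0]
  have hsurj : Function.Surjective φ := fun q =>
    ⟨χ q, by rw [← MonoidHom.comp_apply, hcomp, MonoidHom.id_apply]⟩
  -- the subgroup `⟨z⟩` is normal
  set S : Subgroup (QGrp n k l r) :=
    { carrier := {g | g * z * g⁻¹ ∈ Subgroup.zpowers z ∧ g⁻¹ * z * g ∈ Subgroup.zpowers z}
      one_mem' := by simp [Subgroup.mem_zpowers]
      mul_mem' := by
        rintro a b ⟨ha1, ha2⟩ ⟨hb1, hb2⟩
        constructor
        · obtain ⟨mb, hmb⟩ := Subgroup.mem_zpowers_iff.mp hb1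
          have e : a * b * z * (a * b)⁻¹ = a * (b * z * b⁻¹) * a⁻¹ := by
            simp [mul_assoc]
          rw [e, ← hmb]
          exact conj_mem_zpowers' ha1 mb
        · obtain ⟨ma, hma⟩ := Subgroup.mem_zpowers_iff.mp ha2
          have h2 : b⁻¹ * z * (b⁻¹)⁻¹ ∈ Subgroup.zpowers z := by rw [inv_inv]; exact hb2
          have h3 := conj_mem_zpowers' h2 ma
          rw [inv_inv] at h3
          have e : (a * b)⁻¹ * z * (a * b) = b⁻¹ * (a⁻¹ * z * a) * b := by
            simp [mul_assoc]
          rw [e, ← hma]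
          exact h3
      inv_mem' := by
        rintro a ⟨ha1, ha2⟩
        simp only [Set.mem_setOf_eq, inv_inv]
        exact ⟨ha2, ha1⟩ } with hSdef
  have hxS : x ∈ S := by
    constructor
    · rw [hxz]
      exact Subgroup.mem_zpowers_iff.mpr ⟨r, rfl⟩
    · -- `x⁻¹ z x = z ^ r` as well
      have hz1 : x⁻¹ * z ^ (r : ℤ) * x = z := by
        rw [← hxz]
        simp [mul_assoc]
      obtain ⟨t, ht⟩ := hmdvd
      have hzkl' : z ^ ((k * l : ℕ) : ℤ) = 1 := by rw [zpow_natCast, hzkl]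
      have hzr2 : z ^ (r * r) = z := by
        have hrr : r * r = ((k * l : ℕ) : ℤ) * t + 1 := by linarith
        rw [hrr, zpow_add, zpow_mul, hzkl', one_zpow, one_mul, zpow_one]
      have e := conj_zpow (i := r) (a := x⁻¹) (b := z ^ (r : ℤ))
      rw [inv_inv, hz1, ← zpow_mul, hzr2] at e
      rw [← e]
      exact Subgroup.mem_zpowers_iff.mpr ⟨r, rfl⟩
  have hyS : y ∈ S := by
    constructor
    · rw [hyz]
      exact Subgroup.inv_mem _ (Subgroup.mem_zpowers z)
    · have e : y⁻¹ * z⁻¹ * y = z := by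
        rw [← hyz]
        simp [mul_assoc]
      have e2 : y⁻¹ * z * y = z⁻¹ := by
        rw [show y⁻¹ * z * y = (y⁻¹ * z⁻¹ * y)⁻¹ from by simp [mul_assoc], e]
      rw [e2]
      exact Subgroup.inv_mem _ (Subgroup.mem_zpowers z)
  have hzS : z ∈ S := by
    constructor
    · simpa using Subgroup.mem_zpowers z
    · simpa using Subgroup.mem_zpowers z
  have hS : ∀ g, g ∈ S := by
    intro g
    refine PresentedGroup.generated_by _ S ?_ g
    intro j
    fin_cases j
    exacts [hxS, hyS, hzS]
  haveI hN : (Subgroup.zpowers z).Normal := by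
    constructor
    intro h hh g
    obtain ⟨mh, hmh⟩ := Subgroup.mem_zpowers_iff.mp hh
    rw [← hmh]
    exact conj_mem_zpowers' (hS g).1 mh
  -- kernel computation
  set θ : PresentedGroup (quaternionRels (2 * n)) →* QGrp n k l r ⧸ Subgroup.zpowers z :=
    (QuotientGroup.mk' (Subgroup.zpowers z)).comp χ with hθdef
  have hθφ : θ.comp φ = QuotientGroup.mk' (Subgroup.zpowers z) := by
    ext i
    fin_cases i
    · show θ (φ x) = QuotientGroup.mk' (Subgroup.zpowers z) x
      rw [hφ0, hθdef, MonoidHom.comp_apply, hχ1]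
    · show θ (φ y) = QuotientGroup.mk' (Subgroup.zpowers z) y
      rw [hφ1, hθdef, MonoidHom.comp_apply, hχ0]
    · show θ (φ z) = QuotientGroup.mk' (Subgroup.zpowers z) z
      rw [hφ2, map_one]
      exact ((QuotientGroup.eq_one_iff z).mpr (Subgroup.mem_zpowers z)).symm
  have hker : φ.ker = Subgroup.zpowers z := by
    apply le_antisymm
    · intro g hg
      have h1 : QuotientGroup.mk' (Subgroup.zpowers z) g = θ (φ g) := by
        rw [← hθφ]; rfl
      rw [MonoidHom.mem_ker.mp hg, map_one] at h1
      exact (QuotientGroup.eq_one_iff g).mp h1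
    · exact Subgroup.zpowers_le.mpr (MonoidHom.mem_ker.mpr hφ2)
  refine ⟨φ, hsurj, hker, ?_⟩
  rw [hker, Nat.card_zpowers, horder]
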